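/- Let Γ be a torsion-free discrete subgroup of Isom⁺(ℍ^n) and suppose a, a', b ∈ Γ are nontrivial such that for two distinct integers k, the elements b^{-k}a^{-1}, a'b^k, a^{-1}a' lie in a common cyclic subgroup. If a^{-1}a' is parabolic, then b is parabolic fixing the same point at infinity. -/

import Mathlib

open Matrix

/-- The Minkowski bilinear form of signature `(1, n)` on `ℝ^{n+1}`. -/
noncomputable def mink (n : ℕ) (u v : Fin (n + 1) → ℝ) : ℝ :=
  u 0 * v 0 - ∑ i : Fin n, u i.succ * v i.succ

/-- The upper sheet of the hyperboloid: the hyperboloid model of hyperbolic `n`-space `ℍⁿ`. -/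
def InSheet (n : ℕ) (v : Fin (n + 1) → ℝ) : Prop :=
  mink n v v = 1 ∧ 0 < v 0

/-- The hyperbolic distance `d(x, y) = arcosh(⟨x, y⟩)` on the hyperboloid model. -/
noncomputable def distH (n : ℕ) (x y : Fin (n + 1) → ℝ) : ℝ :=
  Real.log (mink n x y + Real.sqrt ((mink n x y) ^ 2 - 1))

/-- A matrix belongs to `Isom⁺(ℍⁿ) = SO⁺(1, n)` if it preserves the Minkowski form,
preserves the upper sheet of the hyperboloid, and has determinant one. -/
def IsIsomPlus (n : ℕ) (A : GL (Fin (n + 1)) ℝ) : Prop :=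
  (∀ u v, mink n (A.val.mulVec u) (A.val.mulVec v) = mink n u v) ∧
    (∀ v, InSheet n v → InSheet n (A.val.mulVec v)) ∧ A.val.det = 1

/-- The translation length of an isometry of `ℍⁿ`. -/
noncomputable def transLen (n : ℕ) (A : GL (Fin (n + 1)) ℝ) : ℝ :=
  sInf {d : ℝ | ∃ v, InSheet n v ∧ d = distH n (A.val.mulVec v) v}

/-- An isometry of `ℍⁿ` is hyperbolic (loxodromic) if its translation length is positive. -/
def IsHyperbolicIso (n : ℕ) (A : GL (Fin (n + 1)) ℝ) : Prop :=
  0 < transLen n A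

/-- An isometry of `ℍⁿ` is parabolic if its translation length is zero and it has no fixed
point in `ℍⁿ`. -/
def IsParabolicIso (n : ℕ) (A : GL (Fin (n + 1)) ℝ) : Prop :=
  transLen n A = 0 ∧ ∀ v, InSheet n v → A.val.mulVec v ≠ v

namespace MinkAux

variable {n : ℕ}

lemma mink_symm (u v : Fin (n+1) → ℝ) : mink n u v = mink n v u := by
  unfold mink; rw [mul_comm]; congr 1; exact Finset.sum_congr rfl fun i _ => mul_comm _ _

lemma mink_add_left (u w v : Fin (n+1) → ℝ) :
    mink n (u + w) v = mink n u v + mink n w v := by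
  unfold mink
  simp only [Pi.add_apply, add_mul]
  rw [Finset.sum_add_distrib]; ring

lemma mink_add_right (u w v : Fin (n+1) → ℝ) :
    mink n v (u + w) = mink n v u + mink n v w := by
  rw [mink_symm, mink_add_left, mink_symm u v, mink_symm w v]

lemma mink_smul_left (r : ℝ) (u v : Fin (n+1) → ℝ) :
    mink n (r • u) v = r * mink n u v := by
  unfold mink
  simp only [Pi.smul_apply, smul_eq_mul]
  rw [mul_sub, Finset.mul_sum]
  congr 1
  · ring
  · exact Finset.sum_congr rfl fun i _ => by ring

lemma mink_smul_right (r : ℝ) (u v : Fin (n+1) → ℝ) :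
    mink n u (r • v) = r * mink n u v := by
  rw [mink_symm, mink_smul_left, mink_symm]

lemma mink_sub_left (u w v : Fin (n+1) → ℝ) :
    mink n (u - w) v = mink n u v - mink n w v := by
  have := mink_add_left (u - w) w v; rw [sub_add_cancel] at this; linarith

lemma mink_sub_right (u w v : Fin (n+1) → ℝ) :
    mink n v (u - w) = mink n v u - mink n v w := by
  rw [mink_symm, mink_sub_left, mink_symm u v, mink_symm w v]

/-- the spatial part sum of squares -/
lemma mink_self (u : Fin (n+1) → ℝ) :
    ∑ i : Fin n, u i.succ * u i.succ = u 0 * u 0 - mink n u u := by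
  unfold mink; ring

end MinkAux

namespace MinkAux

variable {n : ℕ}

lemma cs_eq_case {f g : Fin n → ℝ}
    (heq : (∑ i, f i * g i) ^ 2 = (∑ i, f i ^ 2) * (∑ i, g i ^ 2))
    (hb : (∑ i, g i ^ 2) ≠ 0) :
    ∀ i, f i = ((∑ i, f i * g i) / (∑ i, g i ^ 2)) * g i := by
  set a := ∑ i, f i ^ 2 with ha
  set b := ∑ i, g i ^ 2 with hbdef
  set c := ∑ i, f i * g i with hc
  have hsum : ∑ i, (b * f i - c * g i) ^ 2
      = b ^ 2 * a - 2 * b * c * c + c ^ 2 * b := by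
    have : ∑ i, (b * f i - c * g i) ^ 2
        = ∑ i, (b ^ 2 * f i ^ 2 - 2 * b * c * (f i * g i) + c ^ 2 * g i ^ 2) :=
      Finset.sum_congr rfl fun i _ => by ring
    rw [this]
    rw [Finset.sum_add_distrib, Finset.sum_sub_distrib, ← Finset.mul_sum, ← Finset.mul_sum,
      ← Finset.mul_sum]
  have hzero : ∑ i, (b * f i - c * g i) ^ 2 = 0 := by
    rw [hsum]; linear_combination (-(b:ℝ)) * heq
  intro i
  have h0 : (b * f i - c * g i) ^ 2 = 0 := by
    have := (Finset.sum_eq_zero_iff_of_nonneg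
      (fun j _ => sq_nonneg (b * f j - c * g j))).mp hzero i (Finset.mem_univ i)
    exact this
  have h1 : b * f i - c * g i = 0 := by
    have := sq_eq_zero_iff.mp h0; exact this
  field_simp
  linarith [h1]

lemma cs_ineq (f g : Fin n → ℝ) :
    (∑ i, f i * g i) ≤ Real.sqrt ((∑ i, f i ^ 2) * (∑ i, g i ^ 2)) := by
  have h := Finset.sum_mul_sq_le_sq_mul_sq Finset.univ f g
  calc (∑ i, f i * g i) ≤ |∑ i, f i * g i| := le_abs_self _
    _ = Real.sqrt ((∑ i, f i * g i) ^ 2) := (Real.sqrt_sq_eq_abs _).symm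
    _ ≤ _ := Real.sqrt_le_sqrt h

lemma sheet_sumsq {u : Fin (n+1) → ℝ} (hu : InSheet n u) :
    ∑ i : Fin n, u i.succ ^ 2 = u 0 ^ 2 - 1 := by
  have h := mink_self u
  rw [hu.1] at h
  calc ∑ i : Fin n, u i.succ ^ 2 = ∑ i : Fin n, u i.succ * u i.succ :=
        Finset.sum_congr rfl fun i _ => sq (u i.succ) ▸ by ring
    _ = u 0 * u 0 - 1 := h
    _ = u 0 ^ 2 - 1 := by ring

lemma sheet_one_le {u : Fin (n+1) → ℝ} (hu : InSheet n u) : 1 ≤ u 0 := by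
  have h := sheet_sumsq hu
  have h2 : (0:ℝ) ≤ ∑ i : Fin n, u i.succ ^ 2 := Finset.sum_nonneg fun i _ => sq_nonneg _
  nlinarith [hu.2]

lemma sheet_coord_bound {u : Fin (n+1) → ℝ} (hu : InSheet n u) (j : Fin (n+1)) :
    |u j| ≤ u 0 := by
  have h := sheet_sumsq hu
  have h2 : u j ^ 2 ≤ u 0 ^ 2 := by
    induction j using Fin.cases with
    | zero => exact le_refl _
    | succ i =>
      have : u i.succ ^ 2 ≤ ∑ i : Fin n, u i.succ ^ 2 :=
        Finset.single_le_sum (fun i _ => sq_nonneg (u i.succ)) (Finset.mem_univ i)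
      nlinarith
  calc |u j| = Real.sqrt (u j ^ 2) := (Real.sqrt_sq_eq_abs _).symm
    _ ≤ Real.sqrt (u 0 ^ 2) := Real.sqrt_le_sqrt h2
    _ = |u 0| := Real.sqrt_sq_eq_abs _
    _ = u 0 := abs_of_pos hu.2

lemma mink_ge_one {u v : Fin (n+1) → ℝ} (hu : InSheet n u) (hv : InSheet n v) :
    1 ≤ mink n u v := by
  have hu0 := sheet_one_le hu
  have hv0 := sheet_one_le hv
  have hS : (∑ i : Fin n, u i.succ * v i.succ)
      ≤ Real.sqrt ((u 0 ^ 2 - 1) * (v 0 ^ 2 - 1)) := by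
    have := cs_ineq (fun i => u i.succ) (fun i => v i.succ)
    rwa [sheet_sumsq hu, sheet_sumsq hv] at this
  have hsq : (u 0 ^ 2 - 1) * (v 0 ^ 2 - 1) ≤ (u 0 * v 0 - 1) ^ 2 := by
    nlinarith [sq_nonneg (u 0 - v 0)]
  have h2 : Real.sqrt ((u 0 ^ 2 - 1) * (v 0 ^ 2 - 1)) ≤ u 0 * v 0 - 1 := by
    calc Real.sqrt ((u 0 ^ 2 - 1) * (v 0 ^ 2 - 1)) ≤ Real.sqrt ((u 0 * v 0 - 1) ^ 2) :=
          Real.sqrt_le_sqrt hsq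
      _ = |u 0 * v 0 - 1| := Real.sqrt_sq_eq_abs _
      _ = u 0 * v 0 - 1 := abs_of_nonneg (by nlinarith)
  unfold mink
  linarith

lemma mink_eq_one_iff {u v : Fin (n+1) → ℝ} (hu : InSheet n u) (hv : InSheet n v)
    (h : mink n u v = 1) : u = v := by
  have hu0 := sheet_one_le hu
  have hv0 := sheet_one_le hv
  set S := ∑ i : Fin n, u i.succ * v i.succ with hSdef
  have hS : S ≤ Real.sqrt ((u 0 ^ 2 - 1) * (v 0 ^ 2 - 1)) := by
    have := cs_ineq (fun i => u i.succ) (fun i => v i.succ)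
    rwa [sheet_sumsq hu, sheet_sumsq hv] at this
  have hsq : (u 0 ^ 2 - 1) * (v 0 ^ 2 - 1) ≤ (u 0 * v 0 - 1) ^ 2 := by
    nlinarith [sq_nonneg (u 0 - v 0)]
  have h2 : Real.sqrt ((u 0 ^ 2 - 1) * (v 0 ^ 2 - 1)) ≤ u 0 * v 0 - 1 := by
    calc Real.sqrt ((u 0 ^ 2 - 1) * (v 0 ^ 2 - 1)) ≤ Real.sqrt ((u 0 * v 0 - 1) ^ 2) :=
          Real.sqrt_le_sqrt hsq
      _ = |u 0 * v 0 - 1| := Real.sqrt_sq_eq_abs _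
      _ = u 0 * v 0 - 1 := abs_of_nonneg (by nlinarith)
  have hminkS : u 0 * v 0 - S = 1 := h
  -- so S = u0 v0 - 1 and all inequalities are equalities
  have hSe : S = u 0 * v 0 - 1 := by linarith
  have hsqrt_eq : Real.sqrt ((u 0 ^ 2 - 1) * (v 0 ^ 2 - 1)) = u 0 * v 0 - 1 := by
    linarith [hS]
  have hab : (u 0 ^ 2 - 1) * (v 0 ^ 2 - 1) = (u 0 * v 0 - 1) ^ 2 := by
    have hnn : (0:ℝ) ≤ (u 0 ^ 2 - 1) * (v 0 ^ 2 - 1) :=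
      mul_nonneg (by nlinarith) (by nlinarith)
    have := Real.sq_sqrt hnn
    rw [hsqrt_eq] at this
    linarith [this]
  have h00 : u 0 = v 0 := by nlinarith [sq_nonneg (u 0 - v 0)]
  -- spatial parts
  have hb := sheet_sumsq hv
  have ha := sheet_sumsq hu
  have hspatial : ∀ i : Fin n, u i.succ = v i.succ := by
    by_cases hbz : (∑ i : Fin n, v i.succ ^ 2) = 0
    · intro i
      have hvz : v i.succ = 0 := by
        have := (Finset.sum_eq_zero_iff_of_nonneg
          (fun j _ => sq_nonneg (v j.succ))).mp hbz i (Finset.mem_univ i)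
        exact sq_eq_zero_iff.mp this
      have haz : (∑ i : Fin n, u i.succ ^ 2) = 0 := by
        rw [ha, hb] at *
        nlinarith [hbz, h00, ha, hb]
      have huz : u i.succ = 0 := by
        have := (Finset.sum_eq_zero_iff_of_nonneg
          (fun j _ => sq_nonneg (u j.succ))).mp haz i (Finset.mem_univ i)
        exact sq_eq_zero_iff.mp this
      rw [huz, hvz]
    · have heqcs : (∑ i : Fin n, (fun i => u i.succ) i * (fun i => v i.succ) i) ^ 2
          = (∑ i : Fin n, (fun i => u i.succ) i ^ 2) * (∑ i : Fin n, (fun i => v i.succ) i ^ 2) := by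
        simp only []
        rw [ha, hb, ← hSdef, hSe, h00]
        nlinarith [hab, h00]
      have := cs_eq_case heqcs hbz
      intro i
      have hri := this i
      have hratio : (∑ i : Fin n, u i.succ * v i.succ) / (∑ i : Fin n, v i.succ ^ 2) = 1 := by
        rw [← hSdef, hSe, hb, h00]
        have : v 0 ^ 2 - 1 ≠ 0 := by rw [← hb]; exact hbz
        field_simp
      rw [hratio] at hri
      linarith [hri]
  funext j
  induction j using Fin.cases with
  | zero => exact h00
  | succ i => exact hspatial i

end MinkAux

namespace MinkAux

variable {n : ℕ}

/-- forward null vector -/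
def FwdNull (n : ℕ) (x : Fin (n+1) → ℝ) : Prop := mink n x x = 0 ∧ 0 < x 0

lemma null_sumsq {x : Fin (n+1) → ℝ} (hx : mink n x x = 0) :
    ∑ i : Fin n, x i.succ ^ 2 = x 0 ^ 2 := by
  have h := mink_self x
  rw [hx] at h
  calc ∑ i : Fin n, x i.succ ^ 2 = ∑ i : Fin n, x i.succ * x i.succ :=
        Finset.sum_congr rfl fun i _ => by ring
    _ = x 0 * x 0 - 0 := h
    _ = x 0 ^ 2 := by ring

lemma fwdNull_ne_zero {x : Fin (n+1) → ℝ} (hx : FwdNull n x) : x ≠ 0 := by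
  intro h
  rw [h] at hx
  exact lt_irrefl 0 (by simpa using hx.2)

lemma null_zero_coord {x : Fin (n+1) → ℝ} (hx : mink n x x = 0) (h0 : x 0 = 0) :
    x = 0 := by
  have h := null_sumsq hx
  rw [h0] at h
  funext j
  induction j using Fin.cases with
  | zero => simpa using h0
  | succ i =>
    have : x i.succ ^ 2 = 0 := by
      have hle : x i.succ ^ 2 ≤ ∑ i : Fin n, x i.succ ^ 2 :=
        Finset.single_le_sum (fun i _ => sq_nonneg (x i.succ)) (Finset.mem_univ i)
      nlinarith [sq_nonneg (x i.succ)]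
    simpa using sq_eq_zero_iff.mp this

lemma fwdNull_pair_nonneg {x y : Fin (n+1) → ℝ} (hx : FwdNull n x) (hy : FwdNull n y) :
    0 ≤ mink n x y := by
  have hS : (∑ i : Fin n, x i.succ * y i.succ)
      ≤ Real.sqrt ((x 0 ^ 2) * (y 0 ^ 2)) := by
    have := cs_ineq (fun i => x i.succ) (fun i => y i.succ)
    rwa [null_sumsq hx.1, null_sumsq hy.1] at this
  have : Real.sqrt ((x 0 ^ 2) * (y 0 ^ 2)) = x 0 * y 0 := by
    rw [← mul_pow, Real.sqrt_sq (mul_nonneg hx.2.le hy.2.le)]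
  unfold mink
  rw [this] at hS
  linarith

/-- two forward null vectors that are Minkowski-orthogonal are positively proportional -/
lemma fwdNull_pair_eq_zero {x y : Fin (n+1) → ℝ} (hx : FwdNull n x) (hy : FwdNull n y)
    (h : mink n x y = 0) : ∃ r : ℝ, 0 < r ∧ x = r • y := by
  refine ⟨x 0 / y 0, div_pos hx.2 hy.2, ?_⟩
  have hb : (∑ i : Fin n, y i.succ ^ 2) ≠ 0 := by
    rw [null_sumsq hy.1]; exact pow_ne_zero 2 (ne_of_gt hy.2)
  have hSe : (∑ i : Fin n, x i.succ * y i.succ) = x 0 * y 0 := by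
    unfold mink at h; linarith
  have heqcs : (∑ i : Fin n, (fun i => x i.succ) i * (fun i => y i.succ) i) ^ 2
      = (∑ i : Fin n, (fun i => x i.succ) i ^ 2) * (∑ i : Fin n, (fun i => y i.succ) i ^ 2) := by
    simp only []
    rw [hSe, null_sumsq hx.1, null_sumsq hy.1]; ring
  have hcs := cs_eq_case heqcs hb
  have hratio : (∑ i : Fin n, x i.succ * y i.succ) / (∑ i : Fin n, y i.succ ^ 2)
      = x 0 / y 0 := by
    rw [hSe, null_sumsq hy.1, sq, mul_comm (x 0) (y 0)]
    exact mul_div_mul_left _ _ (ne_of_gt hy.2)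
  funext j
  induction j using Fin.cases with
  | zero =>
    simp only [Pi.smul_apply, smul_eq_mul]
    exact (div_mul_cancel₀ (x 0) (ne_of_gt hy.2)).symm
  | succ i =>
    have := hcs i
    rw [hratio] at this
    simpa [Pi.smul_apply, smul_eq_mul] using this

/-- two non-proportional forward null vectors have positive inner product -/
lemma fwdNull_pair_pos {x y : Fin (n+1) → ℝ} (hx : FwdNull n x) (hy : FwdNull n y)
    (h : ¬ ∃ r : ℝ, 0 < r ∧ x = r • y) : 0 < mink n x y := by
  rcases lt_or_eq_of_le (fwdNull_pair_nonneg hx hy) with h1 | h1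
  · exact h1
  · exact absurd (fwdNull_pair_eq_zero hx hy h1.symm) h

/-- the basepoint of the sheet -/
def eVec (n : ℕ) : Fin (n+1) → ℝ := fun j => if j = 0 then 1 else 0

lemma eVec_succ (i : Fin n) : eVec n i.succ = 0 := by
  unfold eVec; simp [Fin.succ_ne_zero]

lemma eVec_zero : eVec n 0 = 1 := by unfold eVec; simp

lemma eVec_sheet : InSheet n (eVec n) := by
  constructor
  · unfold mink
    simp [eVec_zero, eVec_succ]
  · rw [eVec_zero]; norm_num

lemma mink_eVec_right (x : Fin (n+1) → ℝ) : mink n x (eVec n) = x 0 := by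
  unfold mink
  simp [eVec_zero, eVec_succ]

/-- midpoint construction: a common fixed sheet point from two fixed null rays -/
lemma sheet_of_two_null {x y : Fin (n+1) → ℝ} (hx : FwdNull n x) (hy : FwdNull n y)
    (hm : 0 < mink n x y) :
    InSheet n ((Real.sqrt (2 * mink n x y))⁻¹ • (x + y)) := by
  have h2m : (0:ℝ) < 2 * mink n x y := by linarith
  have hs : Real.sqrt (2 * mink n x y) > 0 := Real.sqrt_pos.mpr h2m
  constructor
  · have hcalc : mink n ((Real.sqrt (2 * mink n x y))⁻¹ • (x + y))
        ((Real.sqrt (2 * mink n x y))⁻¹ • (x + y))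
        = (Real.sqrt (2 * mink n x y))⁻¹ * (Real.sqrt (2 * mink n x y))⁻¹
          * (2 * mink n x y) := by
      rw [mink_smul_left, mink_smul_right, mink_add_left, mink_add_right, mink_add_right,
        hx.1, hy.1, mink_symm y x]
      ring
    have hss : Real.sqrt (2 * mink n x y) * Real.sqrt (2 * mink n x y) = 2 * mink n x y :=
      Real.mul_self_sqrt h2m.le
    rw [hcalc, ← hss]
    field_simp
    rw [Real.sqrt_sq (Real.sqrt_nonneg _)]
  · simp only [Pi.smul_apply, Pi.add_apply, smul_eq_mul]
    have : 0 < x 0 + y 0 := by linarith [hx.2, hy.2]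
    positivity

end MinkAux

namespace MinkAux

variable {n : ℕ}

lemma gl_inv_mulVec (A : GL (Fin (n+1)) ℝ) (u : Fin (n+1) → ℝ) :
    A⁻¹.val.mulVec (A.val.mulVec u) = u := by
  rw [Matrix.mulVec_mulVec, ← Units.val_mul, inv_mul_cancel, Units.val_one, Matrix.one_mulVec]

lemma gl_mulVec_inv (A : GL (Fin (n+1)) ℝ) (u : Fin (n+1) → ℝ) :
    A.val.mulVec (A⁻¹.val.mulVec u) = u := by
  rw [Matrix.mulVec_mulVec, ← Units.val_mul, mul_inv_cancel, Units.val_one, Matrix.one_mulVec]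

lemma gl_mulVec_eq_zero {A : GL (Fin (n+1)) ℝ} {u : Fin (n+1) → ℝ}
    (h : A.val.mulVec u = 0) : u = 0 := by
  have := congrArg (A⁻¹.val.mulVec) h
  rwa [gl_inv_mulVec, Matrix.mulVec_zero] at this

lemma eig_inv {A : GL (Fin (n+1)) ℝ} {x : Fin (n+1) → ℝ} {t : ℝ}
    (h : A.val.mulVec x = t • x) (ht : t ≠ 0) : A⁻¹.val.mulVec x = t⁻¹ • x := by
  have h2 := congrArg (A⁻¹.val.mulVec) h
  rw [gl_inv_mulVec, Matrix.mulVec_smul] at h2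
  calc A⁻¹.val.mulVec x = t⁻¹ • (t • (A⁻¹.val.mulVec x)) := by
        rw [smul_smul, inv_mul_cancel₀ ht, one_smul]
    _ = t⁻¹ • x := by rw [← h2]

lemma eig_pow {A : GL (Fin (n+1)) ℝ} {x : Fin (n+1) → ℝ} {t : ℝ}
    (h : A.val.mulVec x = t • x) (k : ℕ) : (A ^ k).val.mulVec x = (t ^ k) • x := by
  induction k with
  | zero => simp [Matrix.one_mulVec]
  | succ k ih =>
    rw [pow_succ, Units.val_mul, ← Matrix.mulVec_mulVec, h, Matrix.mulVec_smul, ih,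
      smul_smul, pow_succ]
    congr 1
    ring

lemma eig_zpow {A : GL (Fin (n+1)) ℝ} {x : Fin (n+1) → ℝ} {t : ℝ}
    (h : A.val.mulVec x = t • x) (ht : t ≠ 0) (m : ℤ) :
    (A ^ m).val.mulVec x = (t ^ m) • x := by
  cases m with
  | ofNat k => rw [Int.ofNat_eq_coe, zpow_natCast, zpow_natCast]; exact eig_pow h k
  | negSucc k =>
    rw [zpow_negSucc, zpow_negSucc]
    exact eig_inv (eig_pow h (k+1)) (pow_ne_zero _ ht)

/-- a form/sheet-preserving map sends forward null vectors to forward null vectors -/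
lemma fwd_image {A : GL (Fin (n+1)) ℝ} (hA : IsIsomPlus n A) {x : Fin (n+1) → ℝ}
    (hx : FwdNull n x) : FwdNull n (A.val.mulVec x) := by
  have hnull : mink n (A.val.mulVec x) (A.val.mulVec x) = 0 := by rw [hA.1]; exact hx.1
  refine ⟨hnull, ?_⟩
  have hpos : ∀ ε : ℝ, 0 < ε → 0 < (A.val.mulVec x) 0 + ε * (A.val.mulVec (eVec n)) 0 := by
    intro ε hε
    have hμ : (0:ℝ) < 2 * ε * x 0 + ε ^ 2 :=
      add_pos (mul_pos (mul_pos two_pos hε) hx.2) (pow_pos hε 2)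
    set μ := 2 * ε * x 0 + ε ^ 2 with hμdef
    have hmm : mink n (x + ε • eVec n) (x + ε • eVec n) = μ := by
      rw [mink_add_left, mink_add_right, mink_add_right, hx.1, mink_smul_left,
        mink_smul_right, mink_smul_left, mink_smul_right, mink_eVec_right,
        mink_symm (eVec n) x, mink_eVec_right, (eVec_sheet (n := n)).1]
      ring
    have hsheet : InSheet n ((Real.sqrt μ)⁻¹ • (x + ε • eVec n)) := by
      have hsq : Real.sqrt μ * Real.sqrt μ = μ := Real.mul_self_sqrt hμ.le
      constructor
      · rw [mink_smul_left, mink_smul_right, hmm, ← hsq]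
        have : Real.sqrt μ ≠ 0 := ne_of_gt (Real.sqrt_pos.mpr hμ)
        field_simp
        rw [Real.sqrt_sq (Real.sqrt_nonneg _)]
      · simp only [Pi.smul_apply, Pi.add_apply, smul_eq_mul]
        rw [eVec_zero]
        have h1 : 0 < x 0 + ε * 1 := by linarith [hx.2]
        have h2 : 0 < (Real.sqrt μ)⁻¹ := inv_pos.mpr (Real.sqrt_pos.mpr hμ)
        exact mul_pos h2 h1
    have himg := hA.2.1 _ hsheet
    have h0 := himg.2
    rw [Matrix.mulVec_smul, Matrix.mulVec_add, Matrix.mulVec_smul] at h0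
    simp only [Pi.smul_apply, Pi.add_apply, smul_eq_mul] at h0
    have hsp : 0 < Real.sqrt μ := Real.sqrt_pos.mpr hμ
    have h3 := mul_pos hsp h0
    rw [← mul_assoc, mul_inv_cancel₀ (ne_of_gt hsp), one_mul] at h3
    linarith [h3]
  -- conclude nonneg then positive
  rcases lt_trichotomy ((A.val.mulVec x) 0) 0 with hneg | hzero | hposs
  · exfalso
    have he : 0 < (A.val.mulVec (eVec n)) 0 := (hA.2.1 _ eVec_sheet).2
    have := hpos (-(A.val.mulVec x) 0 / (A.val.mulVec (eVec n)) 0)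
      (div_pos (by linarith) he)
    rw [div_mul_cancel₀ _ (ne_of_gt he)] at this
    linarith
  · exfalso
    have hz := null_zero_coord hnull hzero
    have := gl_mulVec_eq_zero hz
    rw [this] at hx
    exact lt_irrefl 0 (by simpa using hx.2)
  · exact hposs

lemma eig_pos {A : GL (Fin (n+1)) ℝ} (hA : IsIsomPlus n A) {x : Fin (n+1) → ℝ} {t : ℝ}
    (hx : FwdNull n x) (h : A.val.mulVec x = t • x) : 0 < t := by
  have himg := fwd_image hA hx
  rw [h] at himg
  have := himg.2
  simp only [Pi.smul_apply, smul_eq_mul] at this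
  by_contra hle
  push_neg at hle
  nlinarith [hx.2]

/-- vectors Minkowski-orthogonal to a forward null vector are non-positive -/
lemma ortho_null_nonpos {x w : Fin (n+1) → ℝ} (hx : FwdNull n x)
    (h : mink n w x = 0) : mink n w w ≤ 0 := by
  by_contra hpos
  push_neg at hpos
  set a := ∑ i : Fin n, w i.succ ^ 2 with ha
  have haw : a = w 0 ^ 2 - mink n w w := by
    have := mink_self w
    rw [ha]
    calc ∑ i : Fin n, w i.succ ^ 2 = ∑ i : Fin n, w i.succ * w i.succ :=
          Finset.sum_congr rfl fun i _ => by ring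
      _ = w 0 * w 0 - mink n w w := this
      _ = w 0 ^ 2 - mink n w w := by ring
  have halt : a < w 0 ^ 2 := by rw [haw]; linarith
  have hsum : (∑ i : Fin n, w i.succ * x i.succ) = w 0 * x 0 := by
    unfold mink at h; linarith
  have h1 : w 0 * x 0 ≤ Real.sqrt (a * x 0 ^ 2) := by
    have := cs_ineq (fun i => w i.succ) (fun i => x i.succ)
    rwa [hsum, null_sumsq hx.1, ← ha] at this
  have h2 : -(w 0 * x 0) ≤ Real.sqrt (a * x 0 ^ 2) := by
    have hcs := cs_ineq (fun i => -(w i.succ)) (fun i => x i.succ)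
    have e1 : (∑ i : Fin n, -(w i.succ) * x i.succ) = -(w 0 * x 0) := by
      have : ∀ i : Fin n, -(w i.succ) * x i.succ = -(w i.succ * x i.succ) :=
        fun i => by ring
      rw [Finset.sum_congr rfl (fun i _ => this i), Finset.sum_neg_distrib, hsum]
    have e2 : (∑ i : Fin n, (-(w i.succ)) ^ 2) = a := by
      rw [ha]; exact Finset.sum_congr rfl fun i _ => by ring
    rw [e1, e2, null_sumsq hx.1] at hcs
    exact hcs
  have hanneg : (0:ℝ) ≤ a := by
    rw [ha]; exact Finset.sum_nonneg fun i _ => sq_nonneg _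
  have hsq : Real.sqrt (a * x 0 ^ 2) = Real.sqrt a * x 0 := by
    rw [Real.sqrt_mul hanneg, Real.sqrt_sq hx.2.le]
  have hsa : Real.sqrt a < |w 0| := by
    have hlt2 : a < |w 0| ^ 2 := by rwa [sq_abs]
    calc Real.sqrt a < Real.sqrt (|w 0| ^ 2) := Real.sqrt_lt_sqrt hanneg hlt2
      _ = |w 0| := Real.sqrt_sq (abs_nonneg _)
  have habs : |w 0 * x 0| ≤ Real.sqrt a * x 0 := by
    rw [← hsq]
    exact abs_le.mpr ⟨by linarith [h2], by linarith [h1]⟩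
  have habs2 : |w 0| * x 0 = |w 0 * x 0| := by
    rw [abs_mul, abs_of_pos hx.2]
  have hlt : Real.sqrt a * x 0 < |w 0| * x 0 :=
    mul_lt_mul_of_pos_right hsa hx.2
  rw [habs2] at hlt
  linarith

end MinkAux

namespace MinkAux

variable {n : ℕ}

lemma dispSet_nonempty (A : GL (Fin (n+1)) ℝ) :
    {d : ℝ | ∃ v, InSheet n v ∧ d = distH n (A.val.mulVec v) v}.Nonempty :=
  ⟨_, eVec n, eVec_sheet, rfl⟩

lemma dispSet_nonneg {A : GL (Fin (n+1)) ℝ} (hA : IsIsomPlus n A) :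
    ∀ d ∈ {d : ℝ | ∃ v, InSheet n v ∧ d = distH n (A.val.mulVec v) v}, 0 ≤ d := by
  rintro d ⟨v, hv, rfl⟩
  have h1 : 1 ≤ mink n (A.val.mulVec v) v := mink_ge_one (hA.2.1 v hv) hv
  unfold distH
  exact Real.log_nonneg (by nlinarith [Real.sqrt_nonneg ((mink n (A.val.mulVec v) v) ^ 2 - 1)])

lemma transLen_nonneg {A : GL (Fin (n+1)) ℝ} (hA : IsIsomPlus n A) :
    0 ≤ transLen n A :=
  le_csInf (dispSet_nonempty A) (dispSet_nonneg hA)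

lemma transLen_ge_log {A : GL (Fin (n+1)) ℝ} (hA : IsIsomPlus n A) {K : ℝ} (hK : 1 < K)
    (h : ∀ v, InSheet n v → K ≤ mink n (A.val.mulVec v) v) :
    Real.log K ≤ transLen n A := by
  apply le_csInf (dispSet_nonempty A)
  rintro d ⟨v, hv, rfl⟩
  unfold distH
  apply Real.log_le_log (by linarith)
  nlinarith [h v hv, Real.sqrt_nonneg ((mink n (A.val.mulVec v) v) ^ 2 - 1)]

/-- key displacement bound: an isometry with two null eigendirections moves every
point of the sheet by at least `(α+β)/2` in the `cosh` scale -/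
lemma disp_bound {A : GL (Fin (n+1)) ℝ} (hA : IsIsomPlus n A)
    {x y : Fin (n+1) → ℝ} {α β : ℝ}
    (hx : FwdNull n x) (hy : FwdNull n y)
    (hAx : A.val.mulVec x = α • x) (hAy : A.val.mulVec y = β • y)
    (hm : 0 < mink n x y) (hα : 0 < α) (hβ : 0 < β) :
    ∀ v, InSheet n v → (α + β) / 2 ≤ mink n (A.val.mulVec v) v := by
  have hab : α * β = 1 := by
    have := hA.1 x y
    rw [hAx, hAy, mink_smul_left, mink_smul_right] at this
    have h2 : (α * β - 1) * mink n x y = 0 := by linarith [this]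
    rcases mul_eq_zero.mp h2 with h3 | h3
    · linarith
    · exact absurd h3 (ne_of_gt hm)
  intro v hv
  set m := mink n x y with hmdef
  set a := mink n v y / m with hadef
  set bb := mink n v x / m with hbbdef
  have hm0 : m ≠ 0 := ne_of_gt hm
  obtain ⟨w, hwdef⟩ : ∃ w, w = v - a • x - bb • y := ⟨_, rfl⟩
  have hwx : mink n w x = 0 := by
    rw [hwdef, mink_sub_left, mink_sub_left, mink_smul_left, mink_smul_left,
      hx.1, mink_symm y x, hbbdef]
    field_simp
    rw [← hmdef]; ring
  have hwy : mink n w y = 0 := by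
    rw [hwdef, mink_sub_left, mink_sub_left, mink_smul_left, mink_smul_left,
      hy.1, hadef]
    field_simp
    rw [← hmdef]; ring
  have hxw : mink n x w = 0 := by rw [mink_symm]; exact hwx
  have hyw : mink n y w = 0 := by rw [mink_symm]; exact hwy
  have hyx : mink n y x = m := by rw [mink_symm]
  have hAwx : mink n (A.val.mulVec w) x = 0 := by
    have h1 : mink n (A.val.mulVec w) (A.val.mulVec x) = 0 := by rw [hA.1]; exact hwx
    rw [hAx, mink_smul_right] at h1
    rcases mul_eq_zero.mp h1 with h2 | h2
    · exact absurd h2 (ne_of_gt hα)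
    · exact h2
  have hAwy : mink n (A.val.mulVec w) y = 0 := by
    have h1 : mink n (A.val.mulVec w) (A.val.mulVec y) = 0 := by rw [hA.1]; exact hwy
    rw [hAy, mink_smul_right] at h1
    rcases mul_eq_zero.mp h1 with h2 | h2
    · exact absurd h2 (ne_of_gt hβ)
    · exact h2
  have hxAw : mink n x (A.val.mulVec w) = 0 := by rw [mink_symm]; exact hAwx
  have hyAw : mink n y (A.val.mulVec w) = 0 := by rw [mink_symm]; exact hAwy
  -- Cauchy-Schwarz on the negative-semidefinite orthogonal complement
  have hAww : mink n (A.val.mulVec w) (A.val.mulVec w) = mink n w w := hA.1 w w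
  have hkey : mink n w w ≤ mink n (A.val.mulVec w) w := by
    have hdiff : mink n (w - A.val.mulVec w) x = 0 := by
      rw [mink_sub_left, hwx, hAwx]; ring
    have hneg : mink n (w - A.val.mulVec w) (w - A.val.mulVec w) ≤ 0 :=
      ortho_null_nonpos hx hdiff
    simp only [mink_sub_left, mink_sub_right] at hneg
    rw [hAww, mink_symm w (A.val.mulVec w)] at hneg
    linarith
  have hww : mink n w w ≤ 0 := ortho_null_nonpos hx hwx
  -- decomposition of v
  have hv_eq : v = a • x + bb • y + w := by rw [hwdef]; abel
  -- the constraint from v ∈ sheet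
  have hconstraint : 1 = 2 * (a * bb * m) + mink n w w := by
    have h1 : mink n v v = 1 := hv.1
    nth_rewrite 1 [hv_eq] at h1
    nth_rewrite 1 [hv_eq] at h1
    simp only [mink_add_left, mink_add_right, mink_smul_left, mink_smul_right,
      hx.1, hy.1, hwx, hwy, hxw, hyw, hyx, ← hmdef] at h1
    linarith [h1]
  -- the displacement
  have hdisp : mink n (A.val.mulVec v) v
      = a * bb * m * (α + β) + mink n (A.val.mulVec w) w := by
    have hAv : A.val.mulVec v = (a * α) • x + (bb * β) • y + A.val.mulVec w := by
      rw [hv_eq, Matrix.mulVec_add, Matrix.mulVec_add, Matrix.mulVec_smul,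
        Matrix.mulVec_smul, hAx, hAy, smul_smul, smul_smul]
    rw [hAv]
    nth_rewrite 1 [hv_eq]
    simp only [mink_add_left, mink_add_right, mink_smul_left, mink_smul_right,
      hx.1, hy.1, hwx, hwy, hxw, hyw, hyx, hAwx, hAwy, hxAw, hyAw, ← hmdef]
    ring
  have habm : 1 ≤ 2 * (a * bb * m) := by linarith [hww]
  have hs : 2 ≤ α + β := by nlinarith [sq_nonneg (α - β), hab]
  nlinarith [hkey, hdisp, hconstraint, habm, hs]

/-- a parabolic isometry cannot have two independent null eigendirections -/
lemma no_parab_two_eigen {A : GL (Fin (n+1)) ℝ} (hA : IsIsomPlus n A)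
    (hP : IsParabolicIso n A) {x y : Fin (n+1) → ℝ} {α β : ℝ}
    (hx : FwdNull n x) (hy : FwdNull n y)
    (hAx : A.val.mulVec x = α • x) (hAy : A.val.mulVec y = β • y)
    (hm : 0 < mink n x y) : False := by
  have hα : 0 < α := eig_pos hA hx hAx
  have hβ : 0 < β := eig_pos hA hy hAy
  have hab : α * β = 1 := by
    have := hA.1 x y
    rw [hAx, hAy, mink_smul_left, mink_smul_right] at this
    have h2 : (α * β - 1) * mink n x y = 0 := by linarith [this]
    rcases mul_eq_zero.mp h2 with h3 | h3
    · linarith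
    · exact absurd h3 (ne_of_gt hm)
  by_cases hα1 : α = 1
  · -- both eigenvalues 1: A fixes a sheet point
    have hβ1 : β = 1 := by rw [hα1] at hab; linarith
    rw [hα1, one_smul] at hAx
    rw [hβ1, one_smul] at hAy
    have hp := sheet_of_two_null hx hy hm
    apply hP.2 _ hp
    rw [Matrix.mulVec_smul, Matrix.mulVec_add, hAx, hAy]
  · -- distinct eigenvalues: positive translation length
    have hK : 1 < (α + β) / 2 := by
      have hne : α - 1 ≠ 0 := sub_ne_zero.mpr hα1
      have hpos2 : 0 < (α - 1) ^ 2 := by positivity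
      nlinarith [hpos2, hab, hα]
    have hbound := disp_bound hA hx hy hAx hAy hm hα hβ
    have hlog := transLen_ge_log hA hK hbound
    have : 0 < Real.log ((α + β) / 2) := Real.log_pos hK
    rw [hP.1] at hlog
    linarith

end MinkAux

namespace MinkAux

open Filter Topology

variable {n : ℕ}

lemma continuous_mink : Continuous (fun p : ((Fin (n+1) → ℝ) × (Fin (n+1) → ℝ)) =>
    mink n p.1 p.2) := by
  unfold mink
  apply Continuous.sub
  · exact ((continuous_apply 0).comp continuous_fst).mul ((continuous_apply 0).comp continuous_snd)
  · apply continuous_finset_sum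
    intro i _
    exact ((continuous_apply i.succ).comp continuous_fst).mul
      ((continuous_apply i.succ).comp continuous_snd)

lemma tendsto_mink {u v : ℕ → (Fin (n+1) → ℝ)} {U V : Fin (n+1) → ℝ}
    (hu : Tendsto u atTop (𝓝 U)) (hv : Tendsto v atTop (𝓝 V)) :
    Tendsto (fun i => mink n (u i) (v i)) atTop (𝓝 (mink n U V)) :=
  (continuous_mink.tendsto (U, V)).comp (hu.prodMk_nhds hv)

lemma continuous_mulVec (M : Matrix (Fin (n+1)) (Fin (n+1)) ℝ) :
    Continuous fun v : Fin (n+1) → ℝ => M.mulVec v := by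
  apply continuous_pi
  intro i
  simp only [Matrix.mulVec, dotProduct]
  exact continuous_finset_sum _ fun j _ => continuous_const.mul (continuous_apply j)

/-- a parabolic isometry fixes a unique forward null ray -/
lemma parab_eigen {A : GL (Fin (n+1)) ℝ} (hA : IsIsomPlus n A) (hP : IsParabolicIso n A) :
    ∃ x : Fin (n+1) → ℝ, ∃ t : ℝ, FwdNull n x ∧ 0 < t ∧ A.val.mulVec x = t • x := by
  set S := {d : ℝ | ∃ v, InSheet n v ∧ d = distH n (A.val.mulVec v) v} with hSdef
  have hbdd : BddBelow S := ⟨0, fun d hd => dispSet_nonneg hA d hd⟩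
  obtain ⟨u, -, hu_tendsto, hu_mem⟩ := exists_seq_tendsto_sInf (dispSet_nonempty A) hbdd
  have hsInf : sInf S = 0 := hP.1
  rw [hsInf] at hu_tendsto
  choose v hv hdist using hu_mem
  set mseq := fun i => mink n (A.val.mulVec (v i)) (v i) with hmseq
  have hm1 : ∀ i, 1 ≤ mseq i := fun i => mink_ge_one (hA.2.1 _ (hv i)) (hv i)
  have hle : ∀ i, mseq i ≤ Real.exp (u i) := by
    intro i
    have hsq : 0 ≤ Real.sqrt ((mseq i) ^ 2 - 1) := Real.sqrt_nonneg _
    have hpos : 0 < mseq i + Real.sqrt ((mseq i) ^ 2 - 1) := by linarith [hm1 i]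
    have : Real.exp (u i) = mseq i + Real.sqrt ((mseq i) ^ 2 - 1) := by
      rw [hdist i]
      unfold distH
      exact Real.exp_log hpos
    linarith
  have hexp : Tendsto (fun i => Real.exp (u i)) atTop (𝓝 1) := by
    have := (Real.continuous_exp.tendsto 0).comp hu_tendsto
    simpa [Function.comp_def] using this
  have hmlim : Tendsto mseq atTop (𝓝 1) :=
    tendsto_of_tendsto_of_tendsto_of_le_of_le tendsto_const_nhds hexp hm1 hle
  set r := fun i => v i 0 with hrdef
  have hr1 : ∀ i, 1 ≤ r i := fun i => sheet_one_le (hv i)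
  by_cases hfin : ∀ M : ℝ, {i : ℕ | r i ≤ M}.Finite
  · -- r → ∞ : extract null eigenvector at infinity
    have hrtop : Tendsto r atTop atTop := by
      rw [tendsto_atTop]
      intro M
      have := (hfin M).compl_mem_cofinite
      rw [Nat.cofinite_eq_atTop] at this
      filter_upwards [this] with i hi
      simp only [Set.mem_compl_iff, Set.mem_setOf_eq, not_le] at hi
      linarith
    set w := fun i => (r i)⁻¹ • v i with hwdef
    have hrpos : ∀ i, 0 < r i := fun i => lt_of_lt_of_le one_pos (hr1 i)
    have hwmem : ∀ i, w i ∈ Set.univ.pi (fun _ : Fin (n+1) => Set.Icc (-1 : ℝ) 1) := by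
      intro i
      rw [Set.mem_univ_pi]
      intro l
      have hb := sheet_coord_bound (hv i) l
      have : |w i l| ≤ 1 := by
        simp only [hwdef, Pi.smul_apply, smul_eq_mul, abs_mul,
          abs_inv, abs_of_pos (hrpos i)]
        rw [inv_mul_le_iff₀ (hrpos i), mul_one]
        exact hb
      exact ⟨by linarith [abs_le.mp this |>.1], by linarith [abs_le.mp this |>.2]⟩
    have hcompact : IsCompact (Set.univ.pi (fun _ : Fin (n+1) => Set.Icc (-1 : ℝ) 1)) :=
      isCompact_univ_pi fun _ => isCompact_Icc
    obtain ⟨x, -, ψ, hψ, hwlim⟩ := hcompact.tendsto_subseq hwmem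
    have hψtop : Tendsto ψ atTop atTop := hψ.tendsto_atTop
    -- limits
    have hAwlim : Tendsto (fun j => A.val.mulVec (w (ψ j))) atTop (𝓝 (A.val.mulVec x)) :=
      ((continuous_mulVec A.val).tendsto x).comp hwlim
    have hrinv : Tendsto (fun j => (r (ψ j))⁻¹) atTop (𝓝 0) :=
      (tendsto_inv_atTop_zero).comp (hrtop.comp hψtop)
    -- x is null
    have hxnull : mink n x x = 0 := by
      have h1 : Tendsto (fun j => mink n (w (ψ j)) (w (ψ j))) atTop (𝓝 (mink n x x)) :=
        tendsto_mink hwlim hwlim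
      have h2 : ∀ j, mink n (w (ψ j)) (w (ψ j)) = (r (ψ j))⁻¹ * (r (ψ j))⁻¹ := by
        intro j
        rw [hwdef]
        simp only []
        rw [mink_smul_left, mink_smul_right, (hv (ψ j)).1]
        ring
      have h3 : Tendsto (fun j => (r (ψ j))⁻¹ * (r (ψ j))⁻¹) atTop (𝓝 0) := by
        have := hrinv.mul hrinv
        simpa using this
      rw [funext h2] at h1
      exact tendsto_nhds_unique h1 h3
    -- x 0 = 1
    have hx0 : x 0 = 1 := by
      have h1 : Tendsto (fun j => w (ψ j) 0) atTop (𝓝 (x 0)) :=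
        ((continuous_apply (0 : Fin (n+1))).tendsto x).comp hwlim
      have h2 : ∀ j, w (ψ j) 0 = 1 := by
        intro j
        simp only [hwdef, Pi.smul_apply, smul_eq_mul]
        exact inv_mul_cancel₀ (ne_of_gt (hrpos (ψ j)))
      rw [funext h2] at h1
      exact (tendsto_nhds_unique h1 tendsto_const_nhds)
    have hxfwd : FwdNull n x := ⟨hxnull, by rw [hx0]; norm_num⟩
    -- mink (Ax) x = 0
    have hAxx : mink n (A.val.mulVec x) x = 0 := by
      have h1 : Tendsto (fun j => mink n (A.val.mulVec (w (ψ j))) (w (ψ j))) atTop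
          (𝓝 (mink n (A.val.mulVec x) x)) := tendsto_mink hAwlim hwlim
      have h2 : ∀ j, mink n (A.val.mulVec (w (ψ j))) (w (ψ j))
          = (r (ψ j))⁻¹ * (r (ψ j))⁻¹ * mseq (ψ j) := by
        intro j
        rw [hwdef]
        simp only []
        rw [Matrix.mulVec_smul, mink_smul_left, mink_smul_right]
        ring
      have h3 : Tendsto (fun j => (r (ψ j))⁻¹ * (r (ψ j))⁻¹ * mseq (ψ j)) atTop (𝓝 0) := by
        have := (hrinv.mul hrinv).mul (hmlim.comp hψtop)
        simpa using this
      rw [funext h2] at h1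
      exact tendsto_nhds_unique h1 h3
    -- A x is forward null
    have hAxnull : mink n (A.val.mulVec x) (A.val.mulVec x) = 0 := by rw [hA.1]; exact hxnull
    have hAx0 : 0 < (A.val.mulVec x) 0 := (fwd_image hA hxfwd).2
    -- proportionality
    obtain ⟨t, ht, hprop⟩ := fwdNull_pair_eq_zero ⟨hAxnull, hAx0⟩ hxfwd hAxx
    exact ⟨x, t, hxfwd, ht, hprop⟩
  · -- bounded subsequence: would give a fixed point, contradiction
    exfalso
    push_neg at hfin
    obtain ⟨M, hM⟩ := hfin
    have hfreq : ∃ᶠ i in atTop, r i ≤ M := Nat.frequently_atTop_iff_infinite.mpr hM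
    obtain ⟨φ, hφ, hφle⟩ := extraction_of_frequently_atTop hfreq
    have hmem : ∀ j, v (φ j) ∈ Set.univ.pi (fun _ : Fin (n+1) => Set.Icc (-M) M) := by
      intro j
      rw [Set.mem_univ_pi]
      intro l
      have hb := sheet_coord_bound (hv (φ j)) l
      have h2 : |v (φ j) l| ≤ M := le_trans hb (hφle j)
      exact ⟨by linarith [abs_le.mp h2 |>.1], by linarith [abs_le.mp h2 |>.2]⟩
    have hcompact : IsCompact (Set.univ.pi (fun _ : Fin (n+1) => Set.Icc (-M : ℝ) M)) :=
      isCompact_univ_pi fun _ => isCompact_Icc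
    obtain ⟨p, -, ψ, hψ, hplim⟩ := hcompact.tendsto_subseq hmem
    have hψtop : Tendsto (φ ∘ ψ) atTop atTop := (hφ.comp hψ).tendsto_atTop
    have hp_sheet : InSheet n p := by
      constructor
      · have h1 : Tendsto (fun j => mink n (v (φ (ψ j))) (v (φ (ψ j)))) atTop
            (𝓝 (mink n p p)) := tendsto_mink hplim hplim
        have h2 : ∀ j, mink n (v (φ (ψ j))) (v (φ (ψ j))) = 1 := fun j => (hv _).1
        rw [funext h2] at h1
        exact tendsto_nhds_unique h1 tendsto_const_nhds
      · have h1 : Tendsto (fun j => v (φ (ψ j)) 0) atTop (𝓝 (p 0)) :=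
          ((continuous_apply (0 : Fin (n+1))).tendsto p).comp hplim
        have h2 : ∀ j, (1:ℝ) ≤ v (φ (ψ j)) 0 := fun j => hr1 _
        have := ge_of_tendsto h1 (Eventually.of_forall h2)
        linarith
    have hfix : A.val.mulVec p = p := by
      apply mink_eq_one_iff (hA.2.1 _ hp_sheet) hp_sheet
      have h1 : Tendsto (fun j => mink n (A.val.mulVec (v (φ (ψ j)))) (v (φ (ψ j)))) atTop
          (𝓝 (mink n (A.val.mulVec p) p)) :=
        tendsto_mink (((continuous_mulVec A.val).tendsto p).comp hplim) hplim
      have h2 : Tendsto (fun j => mseq (φ (ψ j))) atTop (𝓝 1) := hmlim.comp hψtop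
      exact tendsto_nhds_unique h1 h2
    exact hP.2 p hp_sheet hfix

end MinkAux

namespace MinkAux

open Filter Topology

variable {n : ℕ}

/-- points on the sheet at bounded "distance" from `p` have bounded coordinates -/
lemma sheet_bound_of_mink {p u : Fin (n+1) → ℝ} (hp : InSheet n p) (hu : InSheet n u)
    (l : Fin (n+1)) :
    |u l| ≤ mink n u p / (p 0 - Real.sqrt (p 0 ^ 2 - 1)) := by
  have hp0 := sheet_one_le hp
  have hu0 := sheet_one_le hu
  have hδ : 0 < p 0 - Real.sqrt (p 0 ^ 2 - 1) := by
    have h1 : Real.sqrt (p 0 ^ 2 - 1) < Real.sqrt (p 0 ^ 2) :=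
      Real.sqrt_lt_sqrt (by nlinarith) (by nlinarith)
    rw [Real.sqrt_sq (by linarith)] at h1
    linarith
  have hcs : (∑ i : Fin n, u i.succ * p i.succ)
      ≤ Real.sqrt (u 0 ^ 2 - 1) * Real.sqrt (p 0 ^ 2 - 1) := by
    have := cs_ineq (fun i => u i.succ) (fun i => p i.succ)
    rwa [sheet_sumsq hu, sheet_sumsq hp, Real.sqrt_mul (by nlinarith)] at this
  have hsu : Real.sqrt (u 0 ^ 2 - 1) ≤ u 0 := by
    calc Real.sqrt (u 0 ^ 2 - 1) ≤ Real.sqrt (u 0 ^ 2) := Real.sqrt_le_sqrt (by nlinarith)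
      _ = u 0 := Real.sqrt_sq (by linarith)
  have hkey : u 0 * (p 0 - Real.sqrt (p 0 ^ 2 - 1)) ≤ mink n u p := by
    unfold mink
    have hsqnn : 0 ≤ Real.sqrt (p 0 ^ 2 - 1) := Real.sqrt_nonneg _
    nlinarith [hcs, hsu]
  have hul : |u l| ≤ u 0 := sheet_coord_bound hu l
  rw [le_div_iff₀ hδ]
  nlinarith [hul, hkey]

/-- elliptic elements of a discrete torsion-free group are trivial -/
lemma elliptic_trivial (Γ : Subgroup (GL (Fin (n + 1)) ℝ))
    (hdisc : DiscreteTopology Γ)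
    (hiso : ∀ g ∈ Γ, IsIsomPlus n g)
    (htf : ∀ g ∈ Γ, IsOfFinOrder g → g = 1)
    {g : GL (Fin (n + 1)) ℝ} (hg : g ∈ Γ)
    {p : Fin (n+1) → ℝ} (hp : InSheet n p) (hfix : g.val.mulVec p = p) : g = 1 := by
  classical
  -- powers of g fix p
  have hfix1 : g.val.mulVec p = (1:ℝ) • p := by rw [one_smul]; exact hfix
  have hfixpow : ∀ k : ℕ, (g ^ k).val.mulVec p = p := by
    intro k
    rw [eig_pow hfix1 k, one_pow, one_smul]
  have hpow_mem : ∀ k : ℕ, g ^ k ∈ Γ := fun k => pow_mem hg k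
  have hpowiso : ∀ k : ℕ, IsIsomPlus n (g ^ k) := fun k => hiso _ (hpow_mem k)
  -- the perturbation family
  set Msum := ∑ i : Fin n, |p i.succ| with hMsum
  have hMsum0 : 0 ≤ Msum := Finset.sum_nonneg fun i _ => abs_nonneg _
  set ε := 1 / (4 * (1 + Msum)) with hε
  have hεpos : 0 < ε := by rw [hε]; positivity
  set E : Fin n → (Fin (n+1) → ℝ) := fun i => Pi.single i.succ (1:ℝ) with hE
  have hEval : ∀ (i : Fin n) (l : Fin (n+1)), E i l = if l = i.succ then 1 else 0 := by
    intro i l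
    rw [hE]
    by_cases h : l = i.succ
    · subst h; simp
    · simp [Pi.single_eq_of_ne h, h]
  have hE0 : ∀ i : Fin n, E i 0 = 0 := by
    intro i
    rw [hEval, if_neg (Ne.symm (Fin.succ_ne_zero i))]
  have hminkE : ∀ i : Fin n, mink n (E i) (E i) = -1 := by
    intro i
    unfold mink
    rw [hE0 i]
    have : ∀ j : Fin n, E i j.succ * E i j.succ = if j = i then 1 else 0 := by
      intro j
      by_cases hji : j = i
      · subst hji; rw [hEval, if_pos rfl]; norm_num
      · rw [hEval, if_neg (fun hc => hji (Fin.succ_injective n hc)), if_neg hji]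
        ring
    rw [Finset.sum_congr rfl fun j _ => this j]
    simp
  have hminkpE : ∀ i : Fin n, mink n p (E i) = -(p i.succ) := by
    intro i
    unfold mink
    rw [hE0 i]
    have : ∀ j : Fin n, p j.succ * E i j.succ = if j = i then p i.succ else 0 := by
      intro j
      by_cases hji : j = i
      · subst hji; rw [hEval, if_pos rfl]; norm_num
      · rw [hEval, if_neg (fun hc => hji (Fin.succ_injective n hc)), if_neg hji]
        ring
    rw [Finset.sum_congr rfl fun j _ => this j]
    simp
  -- the vectors w j , j : Fin (n+1)
  set wv : Fin (n+1) → (Fin (n+1) → ℝ) :=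
    Fin.cases p (fun i => p + ε • E i) with hwv
  -- each wv j has positive Minkowski norm
  have hμpos : ∀ j : Fin (n+1), 0 < mink n (wv j) (wv j) := by
    intro j
    induction j using Fin.cases with
    | zero => rw [hwv]; simp only [Fin.cases_zero]; rw [hp.1]; norm_num
    | succ i =>
      rw [hwv]
      simp only [Fin.cases_succ]
      rw [mink_add_left, mink_add_right, mink_add_right, hp.1, mink_smul_left,
        mink_smul_right, mink_smul_left, mink_smul_right, hminkE i, hminkpE i,
        mink_symm (E i) p, hminkpE i]
      have habs : |p i.succ| ≤ Msum :=
        Finset.single_le_sum (fun j _ => abs_nonneg (p j.succ)) (Finset.mem_univ i)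
      have h1 : ε * (1 + Msum) = 1/4 := by
        rw [hε]; field_simp
      have hε14 : ε ≤ 1/4 := by nlinarith [hεpos]
      have h2 : ε * |p i.succ| ≤ 1/4 := by
        calc ε * |p i.succ| ≤ ε * (1 + Msum) := by
              apply mul_le_mul_of_nonneg_left _ hεpos.le
              linarith
          _ = 1/4 := h1
      have h3 : ε * p i.succ ≤ 1/4 ∧ -(1:ℝ)/4 ≤ ε * p i.succ := by
        constructor
        · calc ε * p i.succ ≤ |ε * p i.succ| := le_abs_self _
            _ = ε * |p i.succ| := by rw [abs_mul, abs_of_pos hεpos]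
            _ ≤ 1/4 := h2
        · have := neg_abs_le (ε * p i.succ)
          have h4 : |ε * p i.succ| = ε * |p i.succ| := by rw [abs_mul, abs_of_pos hεpos]
          nlinarith [h2]
      nlinarith [h3.1, h3.2, hε14, hεpos]
  -- the matrix W with columns wv j
  set W : Matrix (Fin (n+1)) (Fin (n+1)) ℝ := Matrix.of (fun l j => wv j l) with hW
  have hWlj : ∀ l j, W l j = wv j l := fun l j => rfl
  have hwv0 : ∀ j : Fin (n+1), wv j 0 = p 0 := by
    intro j
    induction j using Fin.cases with
    | zero => rfl
    | succ i =>
      show (p + ε • E i) 0 = p 0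
      simp [hE0 i]
  have hwv_succ : ∀ (i : Fin n) (j : Fin (n+1)),
      wv j i.succ = p i.succ + (if j = i.succ then ε else 0) := by
    intro i j
    induction j using Fin.cases with
    | zero => rw [if_neg (Ne.symm (Fin.succ_ne_zero i))]; show p i.succ = p i.succ + 0; ring
    | succ i' =>
      show (p + ε • E i') i.succ = _
      simp only [Pi.add_apply, Pi.smul_apply, smul_eq_mul]
      rw [hEval i' i.succ]
      by_cases hii : i = i'
      · subst hii
        rw [if_pos rfl, if_pos rfl]
        ring
      · rw [if_neg (fun hc => hii (Fin.succ_injective n hc).symm),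
          if_neg (fun hc => hii (Fin.succ_injective n hc))]
        ring
  have hp0ne : p 0 ≠ 0 := ne_of_gt hp.2
  have hdetW : W.det ≠ 0 := by
    intro hdet
    obtain ⟨α, hαne, hα0⟩ := (Matrix.exists_mulVec_eq_zero_iff).mpr hdet
    have hcoord : ∀ l, ∑ j, W l j * α j = 0 := by
      intro l
      have := congrFun hα0 l
      simpa [Matrix.mulVec, dotProduct] using this
    have hsumα : ∑ j, α j = 0 := by
      have h0 := hcoord 0
      have he : ∀ j : Fin (n+1), W 0 j * α j = p 0 * α j := by
        intro j; rw [hWlj, hwv0]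
      rw [Finset.sum_congr rfl (fun j _ => he j), ← Finset.mul_sum] at h0
      rcases mul_eq_zero.mp h0 with h | h
      · exact absurd h hp0ne
      · exact h
    have hsucc : ∀ i : Fin n, α i.succ = 0 := by
      intro i
      have hl := hcoord i.succ
      have hexpand : ∑ j, W i.succ j * α j = p i.succ * (∑ j, α j) + ε * α i.succ := by
        have he : ∀ j : Fin (n+1), W i.succ j * α j
            = p i.succ * α j + (if j = i.succ then ε * α j else 0) := by
          intro j
          rw [hWlj, hwv_succ i j]
          by_cases hj : j = i.succ
          · rw [if_pos hj, if_pos hj]; ring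
          · rw [if_neg hj, if_neg hj]; ring
        rw [Finset.sum_congr rfl (fun j _ => he j), Finset.sum_add_distrib, ← Finset.mul_sum,
          Finset.sum_ite_eq' Finset.univ i.succ (fun j => ε * α j)]
        simp
      rw [hexpand, hsumα, mul_zero, zero_add] at hl
      rcases mul_eq_zero.mp hl with h | h
      · exact absurd h (ne_of_gt hεpos)
      · exact h
    apply hαne
    funext j
    induction j using Fin.cases with
    | zero =>
      have := hsumα
      rw [Fin.sum_univ_succ] at this
      rw [Finset.sum_congr rfl (fun i _ => hsucc i)] at this
      simpa using this
    | succ i => exact hsucc i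
  have hWunit : IsUnit W.det := isUnit_iff_ne_zero.mpr hdetW
  -- normalized sheet points
  set q : Fin (n+1) → (Fin (n+1) → ℝ) :=
    fun j => (Real.sqrt (mink n (wv j) (wv j)))⁻¹ • wv j with hqdef
  have hq : ∀ j, InSheet n (q j) := by
    intro j
    have hμ := hμpos j
    have hs : 0 < Real.sqrt (mink n (wv j) (wv j)) := Real.sqrt_pos.mpr hμ
    have hsq : Real.sqrt (mink n (wv j) (wv j)) * Real.sqrt (mink n (wv j) (wv j))
        = mink n (wv j) (wv j) := Real.mul_self_sqrt hμ.le
    constructor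
    · rw [hqdef]
      simp only []
      rw [mink_smul_left, mink_smul_right, ← hsq]
      field_simp
      rw [Real.sqrt_sq (Real.sqrt_nonneg _)]
    · rw [hqdef]
      simp only [Pi.smul_apply, smul_eq_mul]
      rw [hwv0 j]
      exact mul_pos (inv_pos.mpr hs) hp.2
  set δ := p 0 - Real.sqrt (p 0 ^ 2 - 1) with hδdef
  set CB : Fin (n+1) → ℝ :=
    fun j => Real.sqrt (mink n (wv j) (wv j)) * (mink n (q j) p / δ) with hCBdef
  have hbound : ∀ (k : ℕ) (l : Fin (n+1)) (j : Fin (n+1)),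
      |((g^k).val.mulVec (wv j)) l| ≤ CB j := by
    intro k l j
    have hμ := hμpos j
    have hsne : Real.sqrt (mink n (wv j) (wv j)) ≠ 0 := ne_of_gt (Real.sqrt_pos.mpr hμ)
    have hwq : wv j = Real.sqrt (mink n (wv j) (wv j)) • q j := by
      rw [hqdef]
      simp only []
      rw [smul_smul, mul_inv_cancel₀ hsne, one_smul]
    have himg : InSheet n ((g^k).val.mulVec (q j)) := (hpowiso k).2.1 _ (hq j)
    have hminkconst : mink n ((g^k).val.mulVec (q j)) p = mink n (q j) p := by
      conv_lhs => rw [← hfixpow k]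
      exact (hpowiso k).1 _ _
    have hb := sheet_bound_of_mink hp himg l
    rw [hminkconst] at hb
    conv_lhs => rw [hwq]
    rw [Matrix.mulVec_smul]
    simp only [Pi.smul_apply, smul_eq_mul, abs_mul, abs_of_nonneg (Real.sqrt_nonneg _)]
    exact mul_le_mul_of_nonneg_left hb (Real.sqrt_nonneg _)
  have hCBnn : ∀ j, 0 ≤ CB j := fun j => le_trans (abs_nonneg _) (hbound 0 0 j)
  set C := ∑ j, CB j with hC
  have hCB_le : ∀ j, CB j ≤ C :=
    fun j => Finset.single_le_sum (fun j _ => hCBnn j) (Finset.mem_univ j)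
  have hCnn : 0 ≤ C := Finset.sum_nonneg fun j _ => hCBnn j
  set D := ∑ m, ∑ j, |W⁻¹ m j| with hD
  have hDnn : 0 ≤ D :=
    Finset.sum_nonneg fun m _ => Finset.sum_nonneg fun j _ => abs_nonneg _
  have hDmj : ∀ m j, |W⁻¹ m j| ≤ D := by
    intro m j
    calc |W⁻¹ m j| ≤ ∑ j', |W⁻¹ m j'| :=
          Finset.single_le_sum (f := fun j' => |W⁻¹ m j'|)
            (fun j' _ => abs_nonneg _) (Finset.mem_univ j)
      _ ≤ D := Finset.single_le_sum (f := fun m' => ∑ j', |W⁻¹ m' j'|)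
          (fun m' _ => Finset.sum_nonneg fun j' _ => abs_nonneg _) (Finset.mem_univ m)
  set R := C * D with hR
  have hMk_bound : ∀ (k : ℕ) (l j : Fin (n+1)), |(g^k).val l j| ≤ R := by
    intro k l j
    have hMW : (g^k).val = ((g^k).val * W) * W⁻¹ :=
      (Matrix.mul_nonsing_inv_cancel_right W (g^k).val hWunit).symm
    have hMWentry : ∀ m, |((g^k).val * W) l m| ≤ CB m := by
      intro m
      have hee : ((g^k).val * W) l m = ((g^k).val.mulVec (wv m)) l := by
        rw [Matrix.mul_apply, Matrix.mulVec, dotProduct]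
        rfl
      rw [hee]
      exact hbound k l m
    conv_lhs => rw [hMW]
    rw [Matrix.mul_apply]
    calc |∑ m, ((g^k).val * W) l m * W⁻¹ m j|
        ≤ ∑ m, |((g^k).val * W) l m * W⁻¹ m j| := Finset.abs_sum_le_sum_abs _ _
      _ ≤ ∑ m, CB m * D := by
          apply Finset.sum_le_sum
          intro m _
          rw [abs_mul]
          exact mul_le_mul (hMWentry m) (hDmj m j) (abs_nonneg _) (hCBnn m)
      _ = C * D := by rw [← Finset.sum_mul]
  -- compactness and limits
  set box : Set (Fin (n+1) → Fin (n+1) → ℝ) :=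
    Set.univ.pi (fun _ => Set.univ.pi fun _ => Set.Icc (-R) R) with hbox
  have hboxc : IsCompact box :=
    isCompact_univ_pi fun _ => isCompact_univ_pi fun _ => isCompact_Icc
  have hmem : ∀ k : ℕ, ((g^k).val : Fin (n+1) → Fin (n+1) → ℝ) ∈ box := by
    intro k
    rw [hbox]; refine Set.mem_univ_pi.mpr ?_
    intro l
    rw [Set.mem_univ_pi]
    intro j
    have := hMk_bound k l j
    exact ⟨by linarith [abs_le.mp this |>.1], by linarith [abs_le.mp this |>.2]⟩
  obtain ⟨L, -, φ, hφ, hLlim⟩ := hboxc.tendsto_subseq hmem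
  set Lm : Matrix (Fin (n+1)) (Fin (n+1)) ℝ := Matrix.of L with hLm
  have hLlim' : Tendsto (fun k => ((g ^ φ k).val : Matrix (Fin (n+1)) (Fin (n+1)) ℝ))
      atTop (𝓝 Lm) := hLlim
  have hdet1 : ∀ k : ℕ, ((g^k).val).det = 1 := fun k => (hpowiso k).2.2
  have hdetL : Lm.det = 1 := by
    have h1 : Tendsto (fun k => ((g ^ φ k).val).det) atTop (𝓝 Lm.det) :=
      ((Continuous.matrix_det continuous_id).tendsto Lm).comp hLlim'
    have h2 : (fun k => ((g ^ φ k).val).det) = fun _ => (1:ℝ) := funext fun k => hdet1 _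
    rw [h2] at h1
    exact tendsto_nhds_unique h1 tendsto_const_nhds
  have hinv_eq : ∀ k : ℕ, (((g ^ φ k)).val)⁻¹ = ((g ^ φ k).val).adjugate := by
    intro k
    rw [Matrix.inv_def, hdet1, Ring.inverse_one, one_smul]
  have hadjlim : Tendsto (fun k => ((g ^ φ k).val).adjugate) atTop
      (𝓝 Lm.adjugate) :=
    ((Continuous.matrix_adjugate continuous_id).tendsto Lm).comp hLlim'
  have hLinv : Lm⁻¹ = Lm.adjugate := by
    rw [Matrix.inv_def, hdetL, Ring.inverse_one, one_smul]
  have hLunit : IsUnit Lm :=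
    (Matrix.isUnit_iff_isUnit_det Lm).mpr (by rw [hdetL]; exact isUnit_one)
  obtain ⟨U, hU⟩ := hLunit
  have hUinv : ((U⁻¹ : (Matrix (Fin (n+1)) (Fin (n+1)) ℝ)ˣ) : Matrix (Fin (n+1)) (Fin (n+1)) ℝ)
      = Lm.adjugate := by
    rw [Matrix.coe_units_inv, hU, hLinv]
  -- convergence in GL
  have hGL : Tendsto (fun k => g ^ φ k) atTop (𝓝 (U : GL (Fin (n+1)) ℝ)) := by
    rw [Units.isInducing_embedProduct.tendsto_nhds_iff]
    have heval : ∀ (u : GL (Fin (n+1)) ℝ),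
        Units.embedProduct _ u = (u.val, MulOpposite.op (u⁻¹).val) := fun u => rfl
    simp only [Function.comp_def, heval]
    apply Tendsto.prodMk_nhds
    · rw [hU]; exact hLlim'
    · rw [hUinv]
      apply (MulOpposite.continuous_op.tendsto _).comp
      have heq : (fun k => ((g ^ φ k)⁻¹).val) = fun k => ((g ^ φ k).val).adjugate := by
        funext k
        rw [Matrix.coe_units_inv, hinv_eq k]
      rw [heq]
      exact hadjlim
  -- quotient sequence in Γ converges to 1
  have hmemΓ : ∀ k : ℕ, g ^ φ (k+1) * (g ^ φ k)⁻¹ ∈ Γ :=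
    fun k => mul_mem (hpow_mem _) (inv_mem (hpow_mem _))
  have hseqlim : Tendsto (fun k => g ^ φ (k+1) * (g ^ φ k)⁻¹) atTop (𝓝 (U * U⁻¹)) := by
    have h1 : Tendsto (fun k => g ^ φ (k+1)) atTop (𝓝 (U : GL (Fin (n+1)) ℝ)) :=
      hGL.comp (tendsto_add_atTop_nat 1)
    exact h1.mul hGL.inv
  rw [mul_inv_cancel] at hseqlim
  have hsub : Tendsto (fun k => (⟨_, hmemΓ k⟩ : Γ)) atTop (𝓝 (1 : Γ)) := by
    rw [IsInducing.subtypeVal.tendsto_nhds_iff]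
    exact hseqlim
  rw [nhds_discrete, tendsto_pure] at hsub
  obtain ⟨k, hk⟩ := hsub.exists
  have heq1 : g ^ φ (k+1) * (g ^ φ k)⁻¹ = 1 := congrArg Subtype.val hk
  have hlt : φ k < φ (k+1) := hφ (Nat.lt_succ_self k)
  have hpow1 : g ^ (φ (k+1) - φ k) = 1 := by
    have h2 : g ^ (φ (k+1) - φ k) * g ^ φ k = g ^ φ (k+1) := by
      rw [← pow_add, Nat.sub_add_cancel hlt.le]
    have h3 : g ^ φ (k+1) = g ^ φ k := by
      have := mul_inv_eq_one.mp heq1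
      exact this
    rw [h3] at h2
    exact mul_right_cancel (by rw [h2, one_mul])
  exact htf g hg (isOfFinOrder_iff_pow_eq_one.mpr
    ⟨φ (k+1) - φ k, Nat.sub_pos_of_lt hlt, hpow1⟩)

end MinkAux

namespace MinkAux

variable {n : ℕ}

/-- If an isometry has eigenvalue `s` then it has eigenvalue `s⁻¹`. -/
lemma second_eigen {B : GL (Fin (n+1)) ℝ} (hB : IsIsomPlus n B)
    {x : Fin (n+1) → ℝ} {s : ℝ} (hx : x ≠ 0) (hBx : B.val.mulVec x = s • x) (hs : s ≠ 0) :
    ∃ y : Fin (n+1) → ℝ, y ≠ 0 ∧ B.val.mulVec y = s⁻¹ • y := by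
  classical
  set d : Fin (n+1) → ℝ := fun l => if l = 0 then 1 else -1 with hd
  set J : Matrix (Fin (n+1)) (Fin (n+1)) ℝ := Matrix.diagonal d with hJ
  have hJJ : J * J = 1 := by
    rw [hJ, Matrix.diagonal_mul_diagonal]
    have hdd : (fun i => d i * d i) = fun _ => (1:ℝ) := by
      funext l
      rw [hd]
      by_cases h : l = 0 <;> simp [h]
    rw [hdd]
    exact Matrix.diagonal_one
  have hd0 : d 0 = 1 := by rw [hd]; simp
  have hdsucc : ∀ i : Fin n, d i.succ = -1 := by
    intro i; rw [hd]; exact if_neg (Fin.succ_ne_zero i)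
  have hminkJ : ∀ u v : Fin (n+1) → ℝ, mink n u v = u ⬝ᵥ (J.mulVec v) := by
    intro u v
    unfold mink
    rw [dotProduct, Fin.sum_univ_succ]
    have h0 : u 0 * J.mulVec v 0 = u 0 * v 0 := by
      rw [hJ, Matrix.mulVec_diagonal, hd0]; ring
    have hsucc : ∀ i : Fin n, u i.succ * J.mulVec v i.succ = -(u i.succ * v i.succ) := by
      intro i
      rw [hJ, Matrix.mulVec_diagonal, hdsucc i]; ring
    rw [h0, Finset.sum_congr rfl (fun i _ => hsucc i), Finset.sum_neg_distrib]
    ring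
  -- the matrix identity Bᵀ J B = J
  have hmat : B.valᵀ * J * B.val = J := by
    apply Matrix.ext
    intro a b
    have hform := hB.1 (Pi.single a 1) (Pi.single b 1)
    rw [hminkJ, hminkJ] at hform
    have h1 : ∀ m, (B.valᵀ * J) a m = B.val m a * d m := by
      intro m; rw [hJ, Matrix.mul_diagonal, Matrix.transpose_apply]
    have hL : (B.valᵀ * J * B.val) a b
        = (B.val.mulVec (Pi.single a 1)) ⬝ᵥ (J.mulVec (B.val.mulVec (Pi.single b 1))) := by
      rw [Matrix.mul_apply, Matrix.mulVec_single_one, Matrix.mulVec_single_one, dotProduct]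
      apply Finset.sum_congr rfl
      intro m _
      rw [h1 m, hJ, Matrix.mulVec_diagonal, Matrix.col_apply, Matrix.col_apply]
      ring
    have hR : (Pi.single a 1 : Fin (n+1) → ℝ) ⬝ᵥ (J.mulVec (Pi.single b 1)) = J a b := by
      rw [Matrix.mulVec_single_one, dotProduct]
      rw [Finset.sum_eq_single a]
      · rw [Pi.single_eq_same, Matrix.col_apply]; ring
      · intro m _ hm
        rw [Pi.single_eq_of_ne hm]; ring
      · intro hcon
        exact absurd (Finset.mem_univ a) hcon
    rw [hL, hform, hR]
  -- B⁻¹ = J Bᵀ J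
  have hdetB : IsUnit B.val.det := by rw [hB.2.2]; exact isUnit_one
  have hBinv : (B.val)⁻¹ = J * B.valᵀ * J := by
    apply Matrix.inv_eq_left_inv
    calc J * B.valᵀ * J * B.val = J * (B.valᵀ * J * B.val) := by
          rw [Matrix.mul_assoc, Matrix.mul_assoc, Matrix.mul_assoc]
      _ = J * J := by rw [hmat]
      _ = 1 := hJJ
  -- determinant identities
  have hdx : (B.val - s • 1).det = 0 := by
    rw [← Matrix.exists_mulVec_eq_zero_iff]
    refine ⟨x, hx, ?_⟩
    rw [Matrix.sub_mulVec, hBx, Matrix.smul_mulVec, Matrix.one_mulVec, sub_self]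
  have hdxt : (B.valᵀ - s • 1).det = 0 := by
    have : B.valᵀ - s • 1 = (B.val - s • 1)ᵀ := by
      rw [Matrix.transpose_sub, Matrix.transpose_smul, Matrix.transpose_one]
    rw [this, Matrix.det_transpose]
    exact hdx
  have hdinv : ((B.val)⁻¹ - s • 1).det = 0 := by
    have hid : (B.val)⁻¹ - s • 1 = J * (B.valᵀ - s • 1) * J := by
      rw [Matrix.mul_sub, Matrix.sub_mul, hBinv]
      congr 1
      rw [Matrix.mul_smul, Matrix.mul_one, Matrix.smul_mul, hJJ]
    rw [hid, Matrix.det_mul, Matrix.det_mul, hdxt]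
    ring
  have hdfinal : (B.val - s⁻¹ • 1).det = 0 := by
    have hone : (1 : Matrix (Fin (n+1)) (Fin (n+1)) ℝ) - s • B.val
        = B.val * ((B.val)⁻¹ - s • 1) := by
      rw [Matrix.mul_sub, Matrix.mul_nonsing_inv _ hdetB, Matrix.mul_smul, Matrix.mul_one]
    have hdone : ((1 : Matrix (Fin (n+1)) (Fin (n+1)) ℝ) - s • B.val).det = 0 := by
      rw [hone, Matrix.det_mul, hdinv, mul_zero]
    have hid2 : B.val - s⁻¹ • 1 = (-s⁻¹) • ((1 : Matrix (Fin (n+1)) (Fin (n+1)) ℝ)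
        - s • B.val) := by
      rw [smul_sub, smul_smul]
      have hc : -s⁻¹ * s = -1 := by field_simp
      rw [hc, neg_one_smul, sub_neg_eq_add, neg_smul]
      abel
    rw [hid2, Matrix.det_smul, hdone]
    ring
  obtain ⟨y, hyne, hy0⟩ := Matrix.exists_mulVec_eq_zero_iff.mpr hdfinal
  refine ⟨y, hyne, ?_⟩
  rw [Matrix.sub_mulVec, Matrix.smul_mulVec, Matrix.one_mulVec, sub_eq_zero] at hy0
  exact hy0

end MinkAux


set_option maxHeartbeats 1000000 in
open MinkAux Filter Topology in
/-- Let `Γ` be a torsion-free discrete subgroup of `Isom⁺(ℍⁿ)` and `a, a', b ∈ Γ` nontrivial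
elements such that, for two distinct integers `k`, the elements `b⁻ᵏa⁻¹`, `a'bᵏ`, `a⁻¹a'`
lie in a common cyclic subgroup of `Γ`. If `a⁻¹a'` is parabolic, then `b` is parabolic and
fixes the same point at infinity (a common ray in the forward light cone). -/
theorem parabolic_of_common_cyclic_parabolic (n : ℕ)
    (Γ : Subgroup (GL (Fin (n + 1)) ℝ))
    (hdisc : DiscreteTopology Γ)
    (hiso : ∀ g ∈ Γ, IsIsomPlus n g)
    (htf : ∀ g ∈ Γ, IsOfFinOrder g → g = 1)
    (a a' b : GL (Fin (n + 1)) ℝ)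
    (ha : a ∈ Γ) (ha' : a' ∈ Γ) (hb : b ∈ Γ)
    (hane : a ≠ 1) (ha'ne : a' ≠ 1) (hbne : b ≠ 1)
    (k k' : ℤ) (hkk' : k ≠ k')
    (hcyc : ∀ j ∈ ({k, k'} : Set ℤ), ∃ z ∈ Γ,
      b ^ (-j) * a⁻¹ ∈ Subgroup.zpowers z ∧ a' * b ^ j ∈ Subgroup.zpowers z ∧
        a⁻¹ * a' ∈ Subgroup.zpowers z)
    (hpar : IsParabolicIso n (a⁻¹ * a')) :
    IsParabolicIso n b ∧
      ∃ x : Fin (n + 1) → ℝ, x ≠ 0 ∧ mink n x x = 0 ∧ 0 < x 0 ∧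
        (∃ t : ℝ, 0 < t ∧ (a⁻¹ * a').val.mulVec x = t • x) ∧
        (∃ t : ℝ, 0 < t ∧ b.val.mulVec x = t • x) := by
  classical
  set c : GL (Fin (n+1)) ℝ := a⁻¹ * a' with hcdef
  have hc : c ∈ Γ := mul_mem (inv_mem ha) ha'
  have hciso : IsIsomPlus n c := hiso c hc
  -- Step 1: b^(k'-k) commutes with c
  have hzpow_comm : ∀ (z u v : GL (Fin (n+1)) ℝ), u ∈ Subgroup.zpowers z →
      v ∈ Subgroup.zpowers z → Commute u v := by
    intro z u v hu hv
    obtain ⟨i, rfl⟩ := hu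
    obtain ⟨j, rfl⟩ := hv
    exact (Commute.refl z).zpow_zpow i j
  obtain ⟨z1, -, -, hz12, hz13⟩ := hcyc k (Set.mem_insert k _)
  obtain ⟨z2, -, -, hz22, hz23⟩ := hcyc k' (Set.mem_insert_of_mem k rfl)
  have hck : Commute c (a' * b ^ k) := hzpow_comm z1 _ _ hz13 hz12
  have hck' : Commute c (a' * b ^ k') := hzpow_comm z2 _ _ hz23 hz22
  set m : ℤ := k' - k with hmdef
  have hm : m ≠ 0 := sub_ne_zero.mpr (Ne.symm hkk')
  have hprod : (a' * b ^ k)⁻¹ * (a' * b ^ k') = b ^ m := by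
    rw [hmdef]
    group
  have hcomm : Commute c (b ^ m) := by
    rw [← hprod]
    exact (hck.inv_right).mul_right hck'
  set B : GL (Fin (n+1)) ℝ := b ^ m with hBdef
  have hBmem : B ∈ Γ := zpow_mem hb m
  have hBiso : IsIsomPlus n B := hiso B hBmem
  have hbiso : IsIsomPlus n b := hiso b hb
  -- b has no finite order
  have hb_nofin : ∀ d : ℤ, d ≠ 0 → b ^ d ≠ 1 := by
    intro d hd hd1
    apply hbne
    apply htf b hb
    apply isOfFinOrder_iff_pow_eq_one.mpr
    refine ⟨d.natAbs, Int.natAbs_pos.mpr hd, ?_⟩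
    have : b ^ ((d.natAbs : ℤ)) = 1 := by
      rcases Int.natAbs_eq d with h | h
      · rw [← h]; exact hd1
      · rw [← neg_neg ((d.natAbs : ℤ)), ← h, _root_.zpow_neg, hd1, inv_one]
    rw [← zpow_natCast]
    exact this
  have hBne1 : B ≠ 1 := hb_nofin m hm
  -- commuting mulVec
  have hcomm_mulVec : ∀ (u v : GL (Fin (n+1)) ℝ), u * v = v * u →
      ∀ w, u.val.mulVec (v.val.mulVec w) = v.val.mulVec (u.val.mulVec w) := by
    intro u v huv w
    rw [Matrix.mulVec_mulVec, Matrix.mulVec_mulVec, ← Units.val_mul, ← Units.val_mul, huv]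
  -- Step 2: the parabolic eigenvector of c
  obtain ⟨x, t, hx, ht, hcx⟩ := parab_eigen hciso hpar
  have hxne : x ≠ 0 := fwdNull_ne_zero hx
  -- Step 3: B x is proportional to x
  have hBx_eig : c.val.mulVec (B.val.mulVec x) = t • (B.val.mulVec x) := by
    rw [hcomm_mulVec c B hcomm.eq x, hcx, Matrix.mulVec_smul]
  have hBxfwd : FwdNull n (B.val.mulVec x) := fwd_image hBiso hx
  have hpropB : ∃ s : ℝ, 0 < s ∧ B.val.mulVec x = s • x := by
    by_contra hnp
    push_neg at hnp
    have hpos : 0 < mink n (B.val.mulVec x) x := by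
      apply fwdNull_pair_pos hBxfwd hx
      rintro ⟨r, hr, hprop⟩
      exact (hnp r hr) hprop
    exact no_parab_two_eigen hciso hpar hBxfwd hx hBx_eig hcx hpos
  obtain ⟨s, hs, hBx⟩ := hpropB
  -- scalar cancellation helper
  have hsmul_cancel : ∀ (r1 r2 : ℝ) (u : Fin (n+1) → ℝ), u ≠ 0 → r1 • u = r2 • u →
      r1 = r2 := by
    intro r1 r2 u hu h
    have h2 : (r1 - r2) • u = 0 := by rw [sub_smul, h, sub_self]
    rcases smul_eq_zero.mp h2 with h3 | h3
    · exact sub_eq_zero.mp h3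
    · exact absurd h3 hu
  -- Step 4: s = 1
  have hs1 : s = 1 := by
    by_contra hs1
    have hsinv_ne : s⁻¹ * s⁻¹ ≠ 1 := by
      intro hcon
      apply hs1
      have h1 : s * s⁻¹ = 1 := mul_inv_cancel₀ (ne_of_gt hs)
      have hss : s * s = 1 := by
        calc s * s = s * s * (s⁻¹ * s⁻¹) := by rw [hcon, mul_one]
          _ = (s * s⁻¹) * (s * s⁻¹) := by ring
          _ = 1 := by rw [h1, mul_one]
      have hfac : (s - 1) * (s + 1) = 0 := by linear_combination hss
      rcases mul_eq_zero.mp hfac with h | h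
      · exact sub_eq_zero.mp h
      · linarith [hs]
    obtain ⟨y, hyne, hBy⟩ := second_eigen hBiso hxne hBx (ne_of_gt hs)
    have hynull : mink n y y = 0 := by
      have h1 := hBiso.1 y y
      rw [hBy, mink_smul_left, mink_smul_right] at h1
      by_contra hyn
      have h2 : (s⁻¹ * s⁻¹ - 1) * mink n y y = 0 := by linear_combination h1
      rcases mul_eq_zero.mp h2 with h3 | h3
      · exact hsinv_ne (sub_eq_zero.mp h3)
      · exact hyn h3
    have hy0ne : y 0 ≠ 0 := fun h0 => hyne (null_zero_coord hynull h0)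
    -- orient y forward
    obtain ⟨y', hy', hBy'⟩ : ∃ y', FwdNull n y' ∧ B.val.mulVec y' = s⁻¹ • y' := by
      rcases lt_or_gt_of_ne hy0ne with hneg | hposy
      · refine ⟨(-1 : ℝ) • y, ⟨?_, ?_⟩, ?_⟩
        · rw [mink_smul_left, mink_smul_right, hynull]; ring
        · simp only [Pi.smul_apply, smul_eq_mul]; linarith
        · rw [Matrix.mulVec_smul, hBy, smul_comm]
      · exact ⟨y, ⟨hynull, hposy⟩, hBy⟩
    have hy'ne : y' ≠ 0 := fwdNull_ne_zero hy'
    -- x and y' are not proportional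
    have hmxy : 0 < mink n x y' := by
      apply fwdNull_pair_pos hx hy'
      rintro ⟨r, hr, hprop⟩
      have h1 : B.val.mulVec x = (r * s⁻¹) • y' := by
        rw [hprop, Matrix.mulVec_smul, hBy', smul_smul]
      have h2 : B.val.mulVec x = (s * r) • y' := by
        rw [hBx, hprop, smul_smul]
      have h3 : r * s⁻¹ = s * r := hsmul_cancel _ _ y' hy'ne (h1.symm.trans h2)
      have hrne : r ≠ 0 := ne_of_gt hr
      rw [mul_comm s r] at h3
      have h4 : s⁻¹ = s := mul_left_cancel₀ hrne h3
      apply hsinv_ne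
      nth_rewrite 2 [h4]
      exact inv_mul_cancel₀ (ne_of_gt hs)
    -- c y' is an s⁻¹ eigenvector of B, hence proportional to y'
    have hcy'fwd : FwdNull n (c.val.mulVec y') := fwd_image hciso hy'
    have hBcy' : B.val.mulVec (c.val.mulVec y') = s⁻¹ • (c.val.mulVec y') := by
      rw [← hcomm_mulVec c B hcomm.eq y', hBy', Matrix.mulVec_smul]
    have hpropc : ∃ lam : ℝ, 0 < lam ∧ c.val.mulVec y' = lam • y' := by
      by_contra hnp
      push_neg at hnp
      have hpos : 0 < mink n (c.val.mulVec y') y' := by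
        apply fwdNull_pair_pos hcy'fwd hy'
        rintro ⟨r, hr, hprop⟩
        exact (hnp r hr) hprop
      have h1 := hBiso.1 (c.val.mulVec y') y'
      rw [hBcy', hBy', mink_smul_left, mink_smul_right] at h1
      have h2 : (s⁻¹ * s⁻¹ - 1) * mink n (c.val.mulVec y') y' = 0 := by linear_combination h1
      rcases mul_eq_zero.mp h2 with h3 | h3
      · exact hsinv_ne (sub_eq_zero.mp h3)
      · exact (ne_of_gt hpos) h3
    obtain ⟨lam, hlam, hcy⟩ := hpropc
    exact no_parab_two_eigen hciso hpar hx hy' hcx hcy hmxy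
  rw [hs1, one_smul] at hBx
  -- Step 5: b x is proportional to x, with ratio 1
  have hbB : b * B = B * b := (Commute.zpow_right (Commute.refl b) m).eq
  have hbxfwd : FwdNull n (b.val.mulVec x) := fwd_image hbiso hx
  have hBbx : B.val.mulVec (b.val.mulVec x) = b.val.mulVec x := by
    rw [← hcomm_mulVec b B hbB x, hBx]
  have hpropb : ∃ r : ℝ, 0 < r ∧ b.val.mulVec x = r • x := by
    by_contra hnp
    push_neg at hnp
    have hpos : 0 < mink n (b.val.mulVec x) x := by
      apply fwdNull_pair_pos hbxfwd hx
      rintro ⟨r, hr, hprop⟩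
      exact (hnp r hr) hprop
    have hp := sheet_of_two_null hbxfwd hx hpos
    have hfixp : B.val.mulVec ((Real.sqrt (2 * mink n (b.val.mulVec x) x))⁻¹
        • (b.val.mulVec x + x)) = (Real.sqrt (2 * mink n (b.val.mulVec x) x))⁻¹
        • (b.val.mulVec x + x) := by
      rw [Matrix.mulVec_smul, Matrix.mulVec_add, hBbx, hBx]
    exact hBne1 (elliptic_trivial Γ hdisc hiso htf hBmem hp hfixp)
  obtain ⟨r, hr, hbx⟩ := hpropb
  have hr1 : r = 1 := by
    have h1 : (B.val).mulVec x = (r ^ m) • x := eig_zpow hbx (ne_of_gt hr) m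
    have h2 : r ^ m = 1 := by
      have := hsmul_cancel (r ^ m) 1 x hxne (by rw [← h1, hBx, one_smul])
      exact this
    have hlog : Real.log (r ^ m) = 0 := by rw [h2, Real.log_one]
    rw [Real.log_zpow] at hlog
    have hlogr : Real.log r = 0 := by
      rcases mul_eq_zero.mp hlog with h | h
      · exact absurd (Int.cast_eq_zero.mp h) hm
      · exact h
    rcases Real.log_eq_zero.mp hlogr with h | h | h
    · exact absurd h (ne_of_gt hr)
    · exact h
    · linarith
  rw [hr1, one_smul] at hbx
  -- Step 6: b is parabolic
  have hnofix : ∀ v, InSheet n v → b.val.mulVec v ≠ v := by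
    intro v hv hfixv
    exact hbne (elliptic_trivial Γ hdisc hiso htf hb hv hfixv)
  have htrans0 : transLen n b = 0 := by
    have hge : 0 ≤ transLen n b := transLen_nonneg hbiso
    -- the family of points escaping to the fixed point at infinity
    set x0 := x 0 with hx0def
    have hx0pos : 0 < x0 := hx.2
    set β : ℕ → ℝ := fun j => Real.sqrt ((j : ℝ) ^ 2 * x0 ^ 2 + 1) - j * x0 with hβ
    have hβpos : ∀ j, 0 < β j := by
      intro j
      simp only [hβ]
      have h0 : ((j:ℝ) * x0) ^ 2 < (j:ℝ) ^ 2 * x0 ^ 2 + 1 := by nlinarith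
      have h1 : (j:ℝ) * x0 < Real.sqrt ((j:ℝ) ^ 2 * x0 ^ 2 + 1) :=
        (Real.lt_sqrt (by positivity)).mpr h0
      linarith
    have hβid : ∀ j, β j ^ 2 + 2 * j * x0 * (β j) = 1 := by
      intro j
      simp only [hβ]
      have h1 : Real.sqrt ((j : ℝ) ^ 2 * x0 ^ 2 + 1) ^ 2 = (j : ℝ) ^ 2 * x0 ^ 2 + 1 :=
        Real.sq_sqrt (by positivity)
      nlinarith [h1]
    set p : ℕ → (Fin (n+1) → ℝ) := fun j => (j : ℝ) • x + (β j) • eVec n with hp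
    have hmex : mink n (eVec n) x = x 0 := by rw [mink_symm, mink_eVec_right]
    have hpsheet : ∀ j, InSheet n (p j) := by
      intro j
      constructor
      · simp only [hp, mink_add_left, mink_add_right, mink_smul_left, mink_smul_right,
          hx.1, mink_eVec_right x, hmex, (eVec_sheet (n := n)).1]
        nlinarith [hβid j]
      · simp only [hp, Pi.add_apply, Pi.smul_apply, smul_eq_mul, eVec_zero]
        have h1 := hβpos j
        have h2 : 0 < (j : ℝ) * x 0 + β j * 1 := by positivity
        exact h2
    set κ := mink n (b.val.mulVec (eVec n)) (eVec n) with hκ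
    have hbp : ∀ j, b.val.mulVec (p j) = (j : ℝ) • x + (β j) • (b.val.mulVec (eVec n)) := by
      intro j
      simp only [hp]
      rw [Matrix.mulVec_add, Matrix.mulVec_smul, Matrix.mulVec_smul, hbx]
    have hbex : mink n (b.val.mulVec (eVec n)) x = x0 := by
      have h1 : mink n (b.val.mulVec (eVec n)) (b.val.mulVec x) = mink n (eVec n) x :=
        hbiso.1 _ _
      rw [hbx] at h1
      rw [h1, mink_symm, mink_eVec_right x]
    have hmj : ∀ j, mink n (b.val.mulVec (p j)) (p j) = 1 + (β j) ^ 2 * (κ - 1) := by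
      intro j
      rw [hbp j]
      simp only [hp, mink_add_left, mink_add_right, mink_smul_left, mink_smul_right,
        hx.1, mink_eVec_right x, hmex, hbex, ← hκ]
      nlinarith [hβid j]
    -- β j → 0
    have hβlim : Tendsto β atTop (𝓝 0) := by
      apply squeeze_zero' (g := fun j : ℕ => 1 / ((j:ℝ) * x0))
        (Eventually.of_forall fun j : ℕ => (hβpos j).le)
      · refine eventually_atTop.mpr ⟨1, fun j hj => ?_⟩
        have hj1 : (1:ℝ) ≤ (j:ℝ) := by exact_mod_cast hj
        have hβj := hβpos j
        have hid := hβid j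
        have hpos2 : 0 < (j:ℝ) * x0 := mul_pos (by linarith) hx0pos
        have h4 : (j:ℝ) * x0 ≤ β j + 2 * j * x0 := by nlinarith
        have h5 : β j = 1 / (β j + 2 * (j:ℝ) * x0) := by
          rw [eq_div_iff (by nlinarith)]
          nlinarith [hid]
        rw [h5]
        apply one_div_le_one_div_of_le hpos2
        linarith [h4]
      · have h6 : Tendsto (fun j : ℕ => (j : ℝ) * x0) atTop atTop :=
          Tendsto.atTop_mul_const hx0pos tendsto_natCast_atTop_atTop
        have h7 := h6.inv_tendsto_atTop
        have h8 : (fun j : ℕ => (j:ℝ) * x0)⁻¹ = fun j : ℕ => 1 / ((j:ℝ) * x0) := by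
          funext j
          simp [one_div]
        rwa [h8] at h7
    -- displacement tends to 0
    have hmlim : Tendsto (fun j => mink n (b.val.mulVec (p j)) (p j)) atTop (𝓝 1) := by
      rw [funext hmj]
      have h1 : Tendsto (fun j => 1 + (β j) ^ 2 * (κ - 1)) atTop
          (𝓝 (1 + 0 ^ 2 * (κ - 1))) := by
        apply Tendsto.const_add
        exact ((hβlim.pow 2).mul_const _)
      simpa using h1
    have hdlim : Tendsto (fun j => distH n (b.val.mulVec (p j)) (p j)) atTop (𝓝 0) := by
      have hcont : ∀ j, distH n (b.val.mulVec (p j)) (p j)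
          = Real.log (mink n (b.val.mulVec (p j)) (p j)
            + Real.sqrt ((mink n (b.val.mulVec (p j)) (p j)) ^ 2 - 1)) := fun j => rfl
      rw [funext hcont]
      have hinner : Tendsto (fun j => mink n (b.val.mulVec (p j)) (p j)
          + Real.sqrt ((mink n (b.val.mulVec (p j)) (p j)) ^ 2 - 1)) atTop
          (𝓝 (1 + Real.sqrt (1 ^ 2 - 1))) := by
        apply Tendsto.add hmlim
        apply Tendsto.comp (Real.continuous_sqrt.tendsto _)
        exact (hmlim.pow 2).sub_const 1
      have h1 : (1 : ℝ) + Real.sqrt (1 ^ 2 - 1) = 1 := by norm_num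
      rw [h1] at hinner
      have hlog := (Real.continuousAt_log one_ne_zero).tendsto.comp hinner
      rw [Real.log_one] at hlog
      exact hlog
    -- conclude
    have hbdd : BddBelow {d : ℝ | ∃ v, InSheet n v ∧ d = distH n (b.val.mulVec v) v} :=
      ⟨0, fun d hd => dispSet_nonneg hbiso d hd⟩
    have hle : ∀ j, transLen n b ≤ distH n (b.val.mulVec (p j)) (p j) := by
      intro j
      exact csInf_le hbdd ⟨p j, hpsheet j, rfl⟩
    have hle0 : transLen n b ≤ 0 := ge_of_tendsto hdlim (Eventually.of_forall hle)
    linarith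
  refine ⟨⟨htrans0, hnofix⟩, x, hxne, hx.1, hx.2, ⟨t, ht, hcx⟩, ⟨1, one_pos, ?_⟩⟩
  rw [one_smul]
  exact hbx
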